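/- If u is coprime to N and c ≡ N (mod 2), then the modulus of the sum of one period of a Zadoff–Chu sequence equals √N: |Σ_{n=0}^{N-1} exp(-iπ u n(n+c)/N)| = √N. -/

import Mathlib

open Complex

noncomputable def zcF (N : ℕ) (u c : ℤ) (n : ℤ) : ℂ :=
  Complex.exp (-((Real.pi : ℂ) * u * (n : ℂ) * ((n : ℂ) + c) / N) * Complex.I)

lemma zcF_period (N : ℕ) (u c : ℤ) (hN : (N : ℂ) ≠ 0) (t : ℤ) (ht : (N : ℤ) + c = 2 * t)
    (n : ℤ) : zcF N u c (n + N) = zcF N u c n := by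
  have hcc : (c : ℂ) = 2 * (t : ℂ) - N := by
    have := congrArg (fun z : ℤ => (z : ℂ)) ht
    push_cast at this
    linear_combination this
  unfold zcF
  have h : -((Real.pi : ℂ) * u * ((n : ℂ) + N) * (((n : ℂ) + N) + c) / N) * Complex.I
      = -((Real.pi : ℂ) * u * n * ((n : ℂ) + c) / N) * Complex.I
        + ((-(u * (n + t)) : ℤ) : ℂ) * (2 * Real.pi * Complex.I) := by
    rw [hcc]
    push_cast
    field_simp
    ring
  push_cast
  rw [h, Complex.exp_add, Complex.exp_int_mul_two_pi_mul_I, mul_one]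

lemma zcF_add (N : ℕ) (u c : ℤ) (hN : (N : ℂ) ≠ 0) (a b : ℤ) :
    zcF N u c (a + b)
      = Complex.exp (-(2 * (Real.pi : ℂ) * u * a * b / N) * Complex.I)
        * zcF N u c a * zcF N u c b := by
  unfold zcF
  rw [← Complex.exp_add, ← Complex.exp_add]
  congr 1
  push_cast
  field_simp
  ring

lemma zcF_conj (N : ℕ) (u c : ℤ) (n : ℤ) :
    zcF N u c n * (starRingEnd ℂ) (zcF N u c n) = 1 := by
  unfold zcF
  rw [← Complex.exp_conj, ← Complex.exp_add]
  have h : (starRingEnd ℂ) (-((Real.pi : ℂ) * u * (n : ℂ) * ((n : ℂ) + c) / N) * Complex.I)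
      = -(-((Real.pi : ℂ) * u * (n : ℂ) * ((n : ℂ) + c) / N) * Complex.I) := by
    simp [map_mul, map_div₀, Complex.conj_I]
  rw [h]
  simp

lemma zc_geom (N : ℕ) (hN : 0 < N) (w : ℤ) (hw : ¬ ((N : ℤ) ∣ w)) :
    ∑ m ∈ Finset.range N,
      Complex.exp (-(2 * (Real.pi : ℂ) * w * m / N) * Complex.I) = 0 := by
  have hNC : (N : ℂ) ≠ 0 := by exact_mod_cast hN.ne'
  set ζ : ℂ := Complex.exp (-(2 * (Real.pi : ℂ) * w / N) * Complex.I) with hζ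
  have hm : ∀ m : ℕ, Complex.exp (-(2 * (Real.pi : ℂ) * w * m / N) * Complex.I) = ζ ^ m := by
    intro m
    have he : -(2 * (Real.pi : ℂ) * w * m / N) * Complex.I
        = (m : ℂ) * (-(2 * (Real.pi : ℂ) * w / N) * Complex.I) := by
      ring
    rw [hζ, he, Complex.exp_nat_mul]
  have hζN : ζ ^ N = 1 := by
    rw [hζ, ← Complex.exp_nat_mul]
    have h : (N : ℂ) * (-(2 * (Real.pi : ℂ) * w / N) * Complex.I)
        = ((-w : ℤ) : ℂ) * (2 * Real.pi * Complex.I) := by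
      push_cast
      field_simp
    rw [h, Complex.exp_int_mul_two_pi_mul_I]
  have hζ1 : ζ ≠ 1 := by
    intro h1
    rw [hζ, Complex.exp_eq_one_iff] at h1
    obtain ⟨k, hk⟩ := h1
    have h2 : (w : ℂ) = (-k : ℤ) * N := by
      have hI : (Complex.I : ℂ) ≠ 0 := Complex.I_ne_zero
      have hπ : (Real.pi : ℂ) ≠ 0 := by
        exact_mod_cast Real.pi_ne_zero
      have h2πI : (2 : ℂ) * Real.pi * Complex.I ≠ 0 :=
        mul_ne_zero (mul_ne_zero two_ne_zero hπ) hI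
      field_simp at hk
      refine mul_left_cancel₀ h2πI ?_
      push_cast
      linear_combination (-(2 * (Real.pi : ℂ) * Complex.I)) * hk
    have h3 : w = -k * N := by exact_mod_cast h2
    exact hw ⟨-k, by linarith⟩
  calc ∑ m ∈ Finset.range N,
      Complex.exp (-(2 * (Real.pi : ℂ) * w * m / N) * Complex.I)
      = ∑ m ∈ Finset.range N, ζ ^ m := by
        exact Finset.sum_congr rfl fun m _ => hm m
    _ = (ζ ^ N - 1) / (ζ - 1) := geom_sum_eq hζ1 N
    _ = 0 := by rw [hζN]; simp

theorem zc_sum_abs (N : ℕ) (hN : 1 ≤ N) (u c : ℤ) (hu : Int.gcd u (N : ℤ) = 1)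
    (hc : c % 2 = (N : ℤ) % 2) :
    ‖∑ n ∈ Finset.range N,
        Complex.exp (-((Real.pi : ℂ) * u * (n : ℂ) * ((n : ℂ) + c) / N) * Complex.I)‖
      = Real.sqrt N := by
  have hN0 : 0 < N := hN
  haveI : NeZero N := ⟨hN0.ne'⟩
  have hNC : (N : ℂ) ≠ 0 := by exact_mod_cast hN0.ne'
  -- N + c is even
  obtain ⟨t, ht⟩ : ∃ t : ℤ, (N : ℤ) + c = 2 * t := by
    have : ((N : ℤ) + c) % 2 = 0 := by omega
    exact ⟨((N : ℤ) + c) / 2, by omega⟩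
  -- the function on ZMod N
  set F : ZMod N → ℂ := fun x => zcF N u c x.val with hF
  set S : ℂ := ∑ n ∈ Finset.range N,
      Complex.exp (-((Real.pi : ℂ) * u * (n : ℂ) * ((n : ℂ) + c) / N) * Complex.I) with hS
  -- S as a sum over ZMod N
  have hsum : ∀ (g : ℕ → ℂ), ∑ x : ZMod N, g x.val = ∑ m ∈ Finset.range N, g m := by
    intro g
    refine Finset.sum_nbij' (fun x => x.val) (fun m => (m : ZMod N)) ?_ ?_ ?_ ?_ ?_
    · intro a _
      exact Finset.mem_range.mpr (ZMod.val_lt a)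
    · intro a _
      exact Finset.mem_univ _
    · intro a _
      exact ZMod.natCast_rightInverse a
    · intro m hm
      exact ZMod.val_cast_of_lt (Finset.mem_range.mp hm)
    · intro a _
      rfl
  have hSF : S = ∑ x : ZMod N, F x := by
    rw [hS, hF, hsum fun m => zcF N u c m]
    apply Finset.sum_congr rfl
    intro m _
    unfold zcF
    push_cast
    ring_nf
  -- key: F (y + k) * conj (F y) = exp(...) * F k
  have hFadd : ∀ y k : ZMod N,
      F (y + k) * (starRingEnd ℂ) (F y)
        = Complex.exp (-(2 * (Real.pi : ℂ) * u * k.val * y.val / N) * Complex.I) * F k := by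
    intro y k
    have h1 : F (y + k) = zcF N u c ((y.val : ℤ) + (k.val : ℤ)) := by
      simp only [hF]
      have hv : (y + k).val = (y.val + k.val) % N := ZMod.val_add y k
      rcases Nat.lt_or_ge (y.val + k.val) N with h | h
      · rw [hv, Nat.mod_eq_of_lt h]
        push_cast
        rfl
      · have hy := ZMod.val_lt y
        have hk2 := ZMod.val_lt k
        have hmod : (y.val + k.val) % N = y.val + k.val - N := by
          rw [Nat.mod_eq_sub_mod h, Nat.mod_eq_of_lt (by omega)]
        rw [hv, hmod]
        have : ((y.val : ℤ) + (k.val : ℤ)) = ((y.val + k.val - N : ℕ) : ℤ) + N := by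
          push_cast
          omega
        rw [this, zcF_period N u c hNC t ht]
    rw [h1]
    have h2 : zcF N u c ((y.val : ℤ) + (k.val : ℤ))
        = Complex.exp (-(2 * (Real.pi : ℂ) * u * y.val * k.val / N) * Complex.I)
          * zcF N u c y.val * zcF N u c k.val := zcF_add N u c hNC _ _
    rw [h2, hF]
    have h3 := zcF_conj N u c (y.val : ℤ)
    calc Complex.exp (-(2 * (Real.pi : ℂ) * u * y.val * k.val / N) * Complex.I)
          * zcF N u c y.val * zcF N u c k.val * (starRingEnd ℂ) (zcF N u c y.val)
        = Complex.exp (-(2 * (Real.pi : ℂ) * u * y.val * k.val / N) * Complex.I)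
          * zcF N u c k.val * (zcF N u c y.val * (starRingEnd ℂ) (zcF N u c y.val)) := by ring
      _ = Complex.exp (-(2 * (Real.pi : ℂ) * u * k.val * y.val / N) * Complex.I)
          * zcF N u c k.val := by rw [h3, mul_one]; ring_nf
  -- inner sum vanishes unless k = 0
  have hinner : ∀ k : ZMod N, k ≠ 0 →
      ∑ y : ZMod N,
        Complex.exp (-(2 * (Real.pi : ℂ) * u * k.val * y.val / N) * Complex.I) = 0 := by
    intro k hk
    have : ∑ y : ZMod N,
        Complex.exp (-(2 * (Real.pi : ℂ) * u * k.val * y.val / N) * Complex.I)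
        = ∑ m ∈ Finset.range N,
          Complex.exp (-(2 * (Real.pi : ℂ) * ((u * (k.val : ℤ) : ℤ) : ℂ) * m / N)
            * Complex.I) := by
      rw [← hsum fun m => Complex.exp
        (-(2 * (Real.pi : ℂ) * ((u * (k.val : ℤ) : ℤ) : ℂ) * m / N) * Complex.I)]
      apply Finset.sum_congr rfl
      intro y _
      congr 1
      push_cast
      ring
    rw [this]
    refine zc_geom N hN0 (u * (k.val : ℤ)) ?_
    intro hdvd
    have hkval : 0 < k.val := by
      rcases Nat.eq_zero_or_pos k.val with h | h
      · exact absurd ((ZMod.val_eq_zero k).mp h) hk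
      · exact h
    have hdN : (N : ℤ) ∣ (k.val : ℤ) := by
      have hcop : IsCoprime (N : ℤ) u := by
        rw [Int.isCoprime_iff_gcd_eq_one, Int.gcd_comm]
        exact hu
      exact hcop.dvd_of_dvd_mul_left hdvd
    have : (N : ℤ) ≤ (k.val : ℤ) := Int.le_of_dvd (by exact_mod_cast hkval) hdN
    have := ZMod.val_lt k
    omega
  -- compute S * conj S
  have hmain : S * (starRingEnd ℂ) S = N := by
    have h1 : S * (starRingEnd ℂ) S
        = ∑ y : ZMod N, ∑ k : ZMod N, F (y + k) * (starRingEnd ℂ) (F y) := by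
      rw [hSF, map_sum, Finset.sum_mul_sum, Finset.sum_comm]
      exact Finset.sum_congr rfl fun y _ =>
        (Fintype.sum_equiv (Equiv.addLeft y) _ _ fun k => rfl).symm
    have h2 : ∑ y : ZMod N, ∑ k : ZMod N, F (y + k) * (starRingEnd ℂ) (F y)
        = ∑ k : ZMod N, (∑ y : ZMod N,
            Complex.exp (-(2 * (Real.pi : ℂ) * u * k.val * y.val / N) * Complex.I)) * F k := by
      rw [Finset.sum_comm]
      refine Finset.sum_congr rfl fun k _ => ?_
      rw [Finset.sum_mul]
      exact Finset.sum_congr rfl fun y _ => hFadd y k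
    rw [h1, h2, Finset.sum_eq_single (0 : ZMod N)]
    · have hF0 : F 0 = 1 := by
        simp [hF, zcF]
      rw [hF0, mul_one]
      have : ∀ y : ZMod N,
          Complex.exp (-(2 * (Real.pi : ℂ) * u * (0 : ZMod N).val * y.val / N) * Complex.I)
            = 1 := by
        intro y
        simp
      rw [Finset.sum_congr rfl fun y _ => this y]
      simp [ZMod.card]
    · intro k _ hk
      rw [hinner k hk, zero_mul]
    · intro h
      exact absurd (Finset.mem_univ 0) h
  have hnormSq : Complex.normSq S = N := by
    have h := hmain
    rw [Complex.mul_conj] at h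
    exact_mod_cast h
  rw [Complex.norm_def, hnormSq]
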